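/- Let B be the subgroup of upper triangular invertible n×n matrices and s = (l,l+1) a simple transposition with permutation matrix σ. If w ∈ S_n, w ≠ sws, and w < ws in Bruhat order, then the double cosets B ẇ B and σ B ẇ B σ (where ẇ is the permutation matrix of w) are disjoint. -/

import Mathlib

open Equiv

/-- `rk w i j` = #{k ≤ i : w(k) ≤ j} (1-indexed), for `w ∈ S_n`. -/
def rk {n : ℕ} (w : Equiv.Perm (Fin n)) (i j : ℕ) : ℕ :=
  (Finset.univ.filter (fun k : Fin n => (k : ℕ) + 1 ≤ i ∧ (w k : ℕ) + 1 ≤ j)).card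

/-- Bruhat order on `S_n` via the rank-matrix criterion: `z ≤ w` iff
`r_{i,j}(z) ≥ r_{i,j}(w)` for all `i,j`. -/
def BruhatLE {n : ℕ} (z w : Equiv.Perm (Fin n)) : Prop :=
  ∀ i ≤ n, ∀ j ≤ n, rk w i j ≤ rk z i j

def BruhatLT {n : ℕ} (z w : Equiv.Perm (Fin n)) : Prop :=
  BruhatLE z w ∧ z ≠ w

/-- Coxeter length = number of inversions. -/
def len {n : ℕ} (w : Equiv.Perm (Fin n)) : ℕ :=
  (Finset.univ.filter (fun p : Fin n × Fin n => p.1 < p.2 ∧ w p.2 < w p.1)).card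

/-- One-line notation of `w`, 1-indexed, extended by the identity outside `[1,n]`
(so that `w(n+1) = n+1`). -/
def ol {n : ℕ} (w : Equiv.Perm (Fin n)) (k : ℕ) : ℕ :=
  if h : 1 ≤ k ∧ k ≤ n then ((w ⟨k - 1, by omega⟩ : Fin n) : ℕ) + 1 else k

/-- The coessential set of `w` (1-indexed pairs). -/
def Coess {n : ℕ} (w : Equiv.Perm (Fin n)) : Set (ℕ × ℕ) :=
  {p | 1 ≤ p.1 ∧ p.1 ≤ n ∧ 1 ≤ p.2 ∧ p.2 ≤ n ∧
    ol w p.1 ≤ p.2 ∧ p.2 < ol w (p.1 + 1) ∧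
    ol w⁻¹ p.2 ≤ p.1 ∧ p.1 < ol w⁻¹ (p.2 + 1)}

/-- `w` contains the pattern 312. -/
def Has312 {n : ℕ} (w : Equiv.Perm (Fin n)) : Prop :=
  ∃ a b c : Fin n, a < b ∧ b < c ∧ w b < w c ∧ w c < w a

/-- `w` contains the pattern 3412. -/
def Has3412 {n : ℕ} (w : Equiv.Perm (Fin n)) : Prop :=
  ∃ a b c d : Fin n, a < b ∧ b < c ∧ c < d ∧ w c < w d ∧ w d < w a ∧ w a < w b

/-- `w` contains the pattern 4231. -/
def Has4231 {n : ℕ} (w : Equiv.Perm (Fin n)) : Prop :=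
  ∃ a b c d : Fin n, a < b ∧ b < c ∧ c < d ∧ w d < w b ∧ w b < w c ∧ w c < w a

/-- `w` is smooth iff it avoids 3412 and 4231. -/
def SmoothPerm {n : ℕ} (w : Equiv.Perm (Fin n)) : Prop := ¬ Has3412 w ∧ ¬ Has4231 w

/-- `w` is codominant iff `i ≤ j` for every `(i,j)` in the coessential set. -/
def Codominant {n : ℕ} (w : Equiv.Perm (Fin n)) : Prop :=
  ∀ p ∈ Coess w, p.1 ≤ p.2

/-- Lexicographic comparison on one-line notations. -/
def LexLe {n : ℕ} (u w : Equiv.Perm (Fin n)) : Prop :=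
  u = w ∨ ∃ i : Fin n, (∀ j < i, u j = w j) ∧ u i < w i

/-- `m` is a Hessenberg function (0-indexed): non-decreasing and `m i ≥ i`. -/
def Hess {n : ℕ} (m : Fin n → Fin n) : Prop :=
  Monotone m ∧ ∀ i, i ≤ m i

/-- `w` is the lexicographically greatest permutation with `w i ≤ m i` for all `i`. -/
def IsLexMax {n : ℕ} (m : Fin n → Fin n) (w : Equiv.Perm (Fin n)) : Prop :=
  (∀ i, w i ≤ m i) ∧ ∀ u : Equiv.Perm (Fin n), (∀ i, u i ≤ m i) → LexLe u w

instance {n : ℕ} (z w : Equiv.Perm (Fin n)) : Decidable (BruhatLE z w) := by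
  unfold BruhatLE; exact Nat.decidableBallLE _ _


/-- The BorelUT subgroup: invertible upper triangular matrices. -/
def BorelUT (n : ℕ) : Set (Matrix (Fin n) (Fin n) ℂ) :=
  {M | IsUnit M ∧ ∀ i j : Fin n, j < i → M i j = 0}

/-- The double coset `B ẇ B`. -/
def dCoset {n : ℕ} (w : Equiv.Perm (Fin n)) : Set (Matrix (Fin n) (Fin n) ℂ) :=
  {x | ∃ b1 ∈ BorelUT n, ∃ b2 ∈ BorelUT n, x = b1 * (w.permMatrix ℂ) * b2}


open Matrix Submodule Module

lemma borel_diag_ne_zero {n : ℕ} {b : Matrix (Fin n) (Fin n) ℂ} (hb : b ∈ BorelUT n)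
    (r : Fin n) : b r r ≠ 0 := by
  obtain ⟨hu, ht⟩ := hb
  have hdet : IsUnit b.det := (Matrix.isUnit_iff_isUnit_det b).1 hu
  have hbt : b.BlockTriangular id := fun i j hij => ht i j hij
  rw [Matrix.det_of_upperTriangular hbt] at hdet
  intro h0
  exact hdet.ne_zero (Finset.prod_eq_zero (Finset.mem_univ r) h0)

/-- Truncation: kill coordinates `≥ j`. -/

def truncLM (n j : ℕ) : (Fin n → ℂ) →ₗ[ℂ] (Fin n → ℂ) where
  toFun v := fun c => if (c : ℕ) < j then v c else 0
  map_add' u v := by funext c; by_cases h : (c : ℕ) < j <;> simp [h]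
  map_smul' a v := by funext c; by_cases h : (c : ℕ) < j <;> simp [h]

/-- Span of truncated rows of `M` indexed by `P`. -/

noncomputable def rSp {n : ℕ} (j : ℕ) (M : Matrix (Fin n) (Fin n) ℂ) (P : Set (Fin n)) :
    Submodule ℂ (Fin n → ℂ) :=
  Submodule.span ℂ ((fun r => truncLM n j (M r)) '' P)

lemma row_mul {n : ℕ} (b M : Matrix (Fin n) (Fin n) ℂ) (r : Fin n) :
    (b * M) r = ∑ k, b r k • M k := by
  funext c
  simp [Matrix.mul_apply, Finset.sum_apply]

lemma span_rows_borel_mul {n : ℕ} {b : Matrix (Fin n) (Fin n) ℂ} (hb : b ∈ BorelUT n)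
    (M : Matrix (Fin n) (Fin n) ℂ) (i : ℕ) :
    Submodule.span ℂ ((fun r => (b * M) r) '' {r : Fin n | i ≤ (r : ℕ)}) =
      Submodule.span ℂ ((fun r => M r) '' {r : Fin n | i ≤ (r : ℕ)}) := by
  apply le_antisymm
  · rw [Submodule.span_le]
    rintro _ ⟨r, hr, rfl⟩
    show (b * M) r ∈ _
    rw [row_mul]
    apply Submodule.sum_mem
    intro k _
    by_cases hk : k < r
    · rw [hb.2 r k hk, zero_smul]
      exact Submodule.zero_mem _
    · refine Submodule.smul_mem _ _ (Submodule.subset_span ⟨k, ?_, rfl⟩)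
      have : (r : ℕ) ≤ (k : ℕ) := by
        have := not_lt.mp hk
        exact Fin.le_iff_val_le_val.mp this
      exact le_trans hr this
  · have key : ∀ d : ℕ, ∀ r : Fin n, n - (r : ℕ) ≤ d → i ≤ (r : ℕ) →
        M r ∈ Submodule.span ℂ ((fun r => (b * M) r) '' {r : Fin n | i ≤ (r : ℕ)}) := by
      intro d
      induction d with
      | zero => intro r hd _; have := r.isLt; omega
      | succ d ih =>
        intro r hd hri
        have hmem : (b * M) r ∈ Submodule.span ℂ
            ((fun r => (b * M) r) '' {r : Fin n | i ≤ (r : ℕ)}) :=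
          Submodule.subset_span ⟨r, hri, rfl⟩
        have hsum : (∑ k ∈ Finset.univ.filter (fun k => r < k), b r k • M k) ∈
            Submodule.span ℂ ((fun r => (b * M) r) '' {r : Fin n | i ≤ (r : ℕ)}) := by
          apply Submodule.sum_mem
          intro k hk
          rw [Finset.mem_filter] at hk
          have hrk : (r : ℕ) < (k : ℕ) := hk.2
          exact Submodule.smul_mem _ _ (ih k (by omega) (by omega))
        have heq : (b * M) r = b r r • M r +
            ∑ k ∈ Finset.univ.filter (fun k => r < k), b r k • M k := by
          rw [row_mul]
          rw [← Finset.add_sum_erase Finset.univ _ (Finset.mem_univ r)]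
          congr 1
          refine (Finset.sum_subset ?_ ?_).symm
          · intro k hk
            rw [Finset.mem_filter] at hk
            exact Finset.mem_erase.mpr ⟨Fin.ne_of_gt hk.2, Finset.mem_univ k⟩
          · intro k hk hk2
            rw [Finset.mem_erase] at hk
            rw [Finset.mem_filter] at hk2
            push_neg at hk2
            have hkr : k < r := by
              rcases lt_or_ge k r with h | h
              · exact h
              · exact absurd (lt_of_le_of_ne h (Ne.symm hk.1)) (by simpa using hk2)
            rw [hb.2 r k hkr, zero_smul]
        have hb0 := borel_diag_ne_zero hb r
        have hMr : M r = (b r r)⁻¹ • ((b * M) r -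
            ∑ k ∈ Finset.univ.filter (fun k => r < k), b r k • M k) := by
          rw [heq]
          rw [add_sub_cancel_right, smul_smul, inv_mul_cancel₀ hb0, one_smul]
        rw [hMr]
        exact Submodule.smul_mem _ _ (Submodule.sub_mem _ hmem hsum)
    rw [Submodule.span_le]
    rintro _ ⟨r, hr, rfl⟩
    exact key n r (by omega) hr

lemma trunc_borel_row_eq_zero {n : ℕ} {b : Matrix (Fin n) (Fin n) ℂ} (hb : b ∈ BorelUT n)
    {j : ℕ} {m : Fin n} (hm : ¬ (m : ℕ) < j) : truncLM n j (b m) = 0 := by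
  funext c
  simp only [truncLM, LinearMap.coe_mk, AddHom.coe_mk]
  by_cases hc : (c : ℕ) < j
  · rw [if_pos hc, hb.2 m c (by omega)]; rfl
  · rw [if_neg hc]; rfl

lemma finrank_span_trunc_borel {n : ℕ} {b : Matrix (Fin n) (Fin n) ℂ} (hb : b ∈ BorelUT n)
    (j : ℕ) (Q : Set (Fin n)) :
    finrank ℂ (Submodule.span ℂ ((fun m => truncLM n j (b m)) '' Q)) =
      {m : Fin n | m ∈ Q ∧ (m : ℕ) < j}.ncard := by
  classical
  set ι := {m : Fin n // m ∈ Q ∧ (m : ℕ) < j}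
  set v : ι → (Fin n → ℂ) := fun m => truncLM n j (b m.1) with hv
  have hspan : Submodule.span ℂ ((fun m => truncLM n j (b m)) '' Q) =
      Submodule.span ℂ (Set.range v) := by
    apply le_antisymm <;> rw [Submodule.span_le]
    · rintro _ ⟨m, hmQ, rfl⟩
      by_cases hmj : (m : ℕ) < j
      · exact Submodule.subset_span ⟨⟨m, hmQ, hmj⟩, rfl⟩
      · show truncLM n j (b m) ∈ _
        rw [trunc_borel_row_eq_zero hb hmj]
        exact Submodule.zero_mem _
    · rintro _ ⟨⟨m, hmQ, hmj⟩, rfl⟩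
      exact Submodule.subset_span ⟨m, hmQ, rfl⟩
  have hvval : ∀ (m : ι) (c : Fin n), (c : ℕ) < j → v m c = b m.1 c := by
    intro m c hc
    simp only [hv, truncLM, LinearMap.coe_mk, AddHom.coe_mk, if_pos hc]
  have hind : LinearIndependent ℂ v := by
    rw [linearIndependent_iff']
    intro sfin g hsumeq i hi
    by_contra hgi
    set t := sfin.filter (fun i => g i ≠ 0) with ht
    have htne : t.Nonempty := ⟨i, Finset.mem_filter.mpr ⟨hi, hgi⟩⟩
    obtain ⟨i0, hi0t, hmin⟩ := Finset.exists_min_image t (fun i => ((i.1 : Fin n) : ℕ)) htne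
    have hi0s : i0 ∈ sfin := (Finset.mem_filter.mp hi0t).1
    have hgi0 : g i0 ≠ 0 := (Finset.mem_filter.mp hi0t).2
    have heval := congrFun hsumeq (i0.1 : Fin n)
    rw [Finset.sum_apply] at heval
    have hsingle : ∑ k ∈ sfin, (g k • v k) (i0.1 : Fin n) = g i0 * v i0 (i0.1 : Fin n) := by
      rw [Finset.sum_eq_single i0]
      · simp
      · intro k hk hki0
        by_cases hgk : g k = 0
        · simp [hgk]
        · have hkt : k ∈ t := Finset.mem_filter.mpr ⟨hk, hgk⟩
          have hle := hmin k hkt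
          have hne : ((i0.1 : Fin n) : ℕ) ≠ ((k.1 : Fin n) : ℕ) := by
            intro h
            exact hki0 (Subtype.ext (Fin.ext h.symm))
          have hlt : ((i0.1 : Fin n) : ℕ) < ((k.1 : Fin n) : ℕ) := by omega
          have : v k (i0.1 : Fin n) = b k.1 i0.1 := hvval k i0.1 i0.2.2
          rw [Pi.smul_apply, this, hb.2 k.1 i0.1 hlt, smul_eq_mul, mul_zero]
      · intro h; exact absurd hi0s h
    rw [hsingle] at heval
    rw [hvval i0 i0.1 i0.2.2] at heval
    exact hgi0 (by
      rcases mul_eq_zero.mp heval with h | h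
      · exact h
      · exact absurd h (borel_diag_ne_zero hb i0.1))
  rw [hspan, finrank_span_eq_card hind]
  rw [← Nat.card_coe_set_eq, Nat.card_eq_fintype_card]
  exact Fintype.card_congr (Equiv.refl _)

lemma rSp_eq_map_trunc {n : ℕ} (j : ℕ) (M : Matrix (Fin n) (Fin n) ℂ) (P : Set (Fin n)) :
    rSp j M P = Submodule.map (truncLM n j) (Submodule.span ℂ ((fun r => M r) '' P)) := by
  rw [Submodule.map_span, rSp, ← Set.image_comp]
  rfl

lemma key_rank {n : ℕ} {w : Equiv.Perm (Fin n)} {y : Matrix (Fin n) (Fin n) ℂ}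
    (hy : y ∈ dCoset w) (j i : ℕ) :
    finrank ℂ (rSp j y {r : Fin n | i ≤ (r : ℕ)}) =
      {k : Fin n | i ≤ (k : ℕ) ∧ ((w k : ℕ) < j)}.ncard := by
  obtain ⟨b1, hb1, b2, hb2, rfl⟩ := hy
  have h1 : rSp j (b1 * w.permMatrix ℂ * b2) {r : Fin n | i ≤ (r : ℕ)} =
      rSp j (w.permMatrix ℂ * b2) {r : Fin n | i ≤ (r : ℕ)} := by
    rw [rSp_eq_map_trunc, rSp_eq_map_trunc, mul_assoc,
      span_rows_borel_mul hb1 (w.permMatrix ℂ * b2) i]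
  rw [h1]
  have h2 : ∀ r : Fin n, (w.permMatrix ℂ * b2) r = b2 (w r) := by
    intro r
    funext c
    rw [Equiv.Perm.permMatrix, PEquiv.toMatrix_toPEquiv_mul]
    rfl
  have h3 : (fun r => truncLM n j ((w.permMatrix ℂ * b2) r)) '' {r : Fin n | i ≤ (r : ℕ)} =
      (fun m => truncLM n j (b2 m)) '' (⇑w '' {r : Fin n | i ≤ (r : ℕ)}) := by
    rw [← Set.image_comp]
    apply Set.image_congr
    intro r _
    simp only [Function.comp_apply, h2]
  rw [rSp, h3, finrank_span_trunc_borel hb2 j]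
  have h4 : {m : Fin n | m ∈ ⇑w '' {r : Fin n | i ≤ (r : ℕ)} ∧ (m : ℕ) < j} =
      ⇑w '' {k : Fin n | i ≤ (k : ℕ) ∧ ((w k : ℕ) < j)} := by
    ext m
    constructor
    · rintro ⟨⟨k, hk, rfl⟩, hmj⟩
      exact ⟨k, ⟨hk, hmj⟩, rfl⟩
    · rintro ⟨k, ⟨hk, hkj⟩, rfl⟩
      exact ⟨⟨k, hk, rfl⟩, hkj⟩
  rw [h4, Set.ncard_image_of_injective _ w.injective]

lemma sigma_step {n : ℕ} (l : Fin n) (hl : (l : ℕ) + 1 < n) (j : ℕ) (hj : j ≠ (l : ℕ) + 1)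
    (x y : Matrix (Fin n) (Fin n) ℂ)
    (hxy : x = ((Equiv.swap l ⟨(l : ℕ) + 1, hl⟩).permMatrix ℂ) * y *
      ((Equiv.swap l ⟨(l : ℕ) + 1, hl⟩).permMatrix ℂ)) :
    finrank ℂ (rSp j x {r : Fin n | (l : ℕ) + 1 ≤ (r : ℕ)}) =
      finrank ℂ (rSp j y {r : Fin n | (r : ℕ) = (l : ℕ) ∨ (l : ℕ) + 2 ≤ (r : ℕ)}) := by
  set l1 : Fin n := ⟨(l : ℕ) + 1, hl⟩ with hl1
  set s := Equiv.swap l l1 with hs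
  have hvl1 : (l1 : ℕ) = (l : ℕ) + 1 := rfl
  have hinv : ∀ rr : Fin n, s (s rr) = rr := fun rr => Equiv.swap_apply_self l l1 rr
  have hent : ∀ r c : Fin n, x r c = y (s r) (s c) := by
    intro r c
    rw [hxy]
    rw [Equiv.Perm.permMatrix, PEquiv.toMatrix_toPEquiv_mul, PEquiv.mul_toMatrix_toPEquiv,
      Equiv.symm_swap]
    rfl
  have hsv : ∀ c : Fin n, c ≠ l → c ≠ l1 → s c = c := by
    intro c h1 h2
    rw [hs, Equiv.swap_apply_of_ne_of_ne h1 h2]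
  have hsval : ∀ c : Fin n, ((s c : ℕ) < j ↔ (c : ℕ) < j) := by
    intro c
    by_cases hcl : c = l
    · subst hcl
      rw [hs, Equiv.swap_apply_left, hvl1]
      omega
    by_cases hcl1 : c = l1
    · subst hcl1
      rw [hs, Equiv.swap_apply_right, hvl1]
      omega
    · rw [hsv c hcl hcl1]
  set E := LinearEquiv.funCongrLeft ℂ ℂ s with hE
  have hpt : ∀ r : Fin n, truncLM n j (x r) = E (truncLM n j (y (s r))) := by
    intro r
    funext c
    have hEapp : E (truncLM n j (y (s r))) c = truncLM n j (y (s r)) (s c) := rfl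
    rw [hEapp]
    simp only [truncLM, LinearMap.coe_mk, AddHom.coe_mk]
    by_cases hc : (c : ℕ) < j
    · rw [if_pos hc, if_pos ((hsval c).mpr hc), hent]
    · rw [if_neg hc, if_neg (fun h => hc ((hsval c).mp h))]
  have hS : ⇑s '' {r : Fin n | (l : ℕ) + 1 ≤ (r : ℕ)} =
      {r : Fin n | (r : ℕ) = (l : ℕ) ∨ (l : ℕ) + 2 ≤ (r : ℕ)} := by
    have hpre : ⇑s '' {r : Fin n | (l : ℕ) + 1 ≤ (r : ℕ)} =
        ⇑s ⁻¹' {r : Fin n | (l : ℕ) + 1 ≤ (r : ℕ)} := by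
      ext r
      constructor
      · rintro ⟨r0, h, rfl⟩
        simp only [Set.mem_preimage, hinv]
        exact h
      · intro h
        rw [Set.mem_preimage] at h
        exact ⟨s r, h, hinv r⟩
    rw [hpre]
    ext r
    simp only [Set.mem_preimage, Set.mem_setOf_eq]
    by_cases hrl : r = l
    · subst hrl
      rw [hs, Equiv.swap_apply_left, hvl1]
      omega
    by_cases hrl1 : r = l1
    · subst hrl1
      rw [hs, Equiv.swap_apply_right, hvl1]
      have : (l : ℕ) < n := by omega
      omega
    · rw [hsv r hrl hrl1]
      have h1 : (r : ℕ) ≠ (l : ℕ) := fun h => hrl (Fin.ext h)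
      have h2 : (r : ℕ) ≠ (l : ℕ) + 1 := fun h => hrl1 (Fin.ext (by rw [h, hvl1]))
      omega
  have himg : (fun r => truncLM n j (x r)) '' {r : Fin n | (l : ℕ) + 1 ≤ (r : ℕ)} =
      ⇑E '' ((fun m => truncLM n j (y m)) ''
        {r : Fin n | (r : ℕ) = (l : ℕ) ∨ (l : ℕ) + 2 ≤ (r : ℕ)}) := by
    rw [← hS, ← Set.image_comp, ← Set.image_comp]
    apply Set.image_congr
    intro r _
    exact hpt r
  rw [rSp, himg]
  have hm := LinearEquiv.finrank_map_eq E (Submodule.span ℂ ((fun m => truncLM n j (y m)) ''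
    {r : Fin n | (r : ℕ) = (l : ℕ) ∨ (l : ℕ) + 2 ≤ (r : ℕ)}))
  rw [Submodule.map_span] at hm
  exact hm

lemma val_lt_of_bruhat {n : ℕ} (l : Fin n) (hl : (l : ℕ) + 1 < n)
    (w : Equiv.Perm (Fin n))
    (hlt : BruhatLT w (w * Equiv.swap l ⟨(l : ℕ) + 1, hl⟩)) :
    (w l : ℕ) < (w ⟨(l : ℕ) + 1, hl⟩ : ℕ) := by
  set l1 : Fin n := ⟨(l : ℕ) + 1, hl⟩ with hl1
  set s := Equiv.swap l l1 with hs
  have hvl1 : (l1 : ℕ) = (l : ℕ) + 1 := rfl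
  have hll1 : l ≠ l1 := fun h => by
    have := congrArg Fin.val h
    omega
  have hab : (w l : ℕ) ≠ (w l1 : ℕ) := fun h =>
    hll1 (w.injective (Fin.ext h))
  by_contra hcon
  have hba : (w l1 : ℕ) < (w l : ℕ) := by omega
  obtain ⟨hle, -⟩ := hlt
  have h1 := hle ((l : ℕ) + 1) (by omega) ((w l1 : ℕ) + 1) (by
    have := (w l1).isLt; omega)
  rw [rk, rk] at h1
  have hsub : (Finset.univ.filter (fun k : Fin n =>
        (k : ℕ) + 1 ≤ (l : ℕ) + 1 ∧ (w k : ℕ) + 1 ≤ (w l1 : ℕ) + 1)) ⊂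
      (Finset.univ.filter (fun k : Fin n =>
        (k : ℕ) + 1 ≤ (l : ℕ) + 1 ∧ ((w * s) k : ℕ) + 1 ≤ (w l1 : ℕ) + 1)) := by
    constructor
    · intro k hk
      rw [Finset.mem_filter] at hk ⊢
      obtain ⟨-, hk1, hk2⟩ := hk
      refine ⟨Finset.mem_univ k, hk1, ?_⟩
      have hkl : k ≠ l := by
        intro h
        subst h
        omega
      have hkl1 : k ≠ l1 := fun h => by
        have := congrArg Fin.val h
        omega
      rw [Equiv.Perm.mul_apply, hs, Equiv.swap_apply_of_ne_of_ne hkl hkl1]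
      exact hk2
    · intro hsup
      have hlmem : l ∈ (Finset.univ.filter (fun k : Fin n =>
          (k : ℕ) + 1 ≤ (l : ℕ) + 1 ∧ ((w * s) k : ℕ) + 1 ≤ (w l1 : ℕ) + 1)) := by
        rw [Finset.mem_filter]
        refine ⟨Finset.mem_univ l, by omega, ?_⟩
        rw [Equiv.Perm.mul_apply, hs, Equiv.swap_apply_left]
      have := hsup hlmem
      rw [Finset.mem_filter] at this
      omega
  exact absurd h1 (not_le.mpr (Finset.card_lt_card hsub))

lemma not_fixed_of_ne {n : ℕ} (l : Fin n) (hl : (l : ℕ) + 1 < n)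
    (w : Equiv.Perm (Fin n))
    (hne : w ≠ Equiv.swap l ⟨(l : ℕ) + 1, hl⟩ * w * Equiv.swap l ⟨(l : ℕ) + 1, hl⟩) :
    ¬ ((w l : ℕ) = (l : ℕ) ∧ (w ⟨(l : ℕ) + 1, hl⟩ : ℕ) = (l : ℕ) + 1) := by
  set l1 : Fin n := ⟨(l : ℕ) + 1, hl⟩ with hl1
  set s := Equiv.swap l l1 with hs
  rintro ⟨ha, hb⟩
  have hwl : w l = l := Fin.ext ha
  have hwl1 : w l1 = l1 := Fin.ext hb
  apply hne
  ext k
  rw [Equiv.Perm.mul_apply, Equiv.Perm.mul_apply]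
  by_cases hkl : k = l
  · subst hkl
    rw [hs, Equiv.swap_apply_left, hwl1, Equiv.swap_apply_right, hwl]
  by_cases hkl1 : k = l1
  · subst hkl1
    rw [hs, Equiv.swap_apply_right, hwl, Equiv.swap_apply_left, hwl1]
  · rw [hs, Equiv.swap_apply_of_ne_of_ne hkl hkl1]
    have h1 : w k ≠ l := fun h => hkl (w.injective (h.trans hwl.symm))
    have h2 : w k ≠ l1 := fun h => hkl1 (w.injective (h.trans hwl1.symm))
    rw [Equiv.swap_apply_of_ne_of_ne h1 h2]

/-- If `w ≠ sws` and `w < ws`, then `B ẇ B` and `σ B ẇ B σ` are disjoint. -/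
theorem stmt12 {n : ℕ} (l : Fin n) (hl : (l : ℕ) + 1 < n)
    (s : Equiv.Perm (Fin n)) (hs : s = Equiv.swap l ⟨(l : ℕ) + 1, hl⟩)
    (w : Equiv.Perm (Fin n)) (hne : w ≠ s * w * s) (hlt : BruhatLT w (w * s)) :
    ∀ x ∈ dCoset w, ∀ y ∈ dCoset w,
      x ≠ (s.permMatrix ℂ) * y * (s.permMatrix ℂ) := by
  subst hs
  intro x hx y hy heq
  set l1 : Fin n := ⟨(l : ℕ) + 1, hl⟩ with hl1
  have hab : (w l : ℕ) < (w l1 : ℕ) := val_lt_of_bruhat l hl w hlt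
  have hnab : ¬ ((w l : ℕ) = (l : ℕ) ∧ (w l1 : ℕ) = (l : ℕ) + 1) :=
    not_fixed_of_ne l hl w hne
  set a := (w l : ℕ) with hadef
  set b := (w l1 : ℕ) with hbdef
  set j := if a = (l : ℕ) then a + 2 else a + 1 with hjdef
  have hja : a < j := by rw [hjdef]; split <;> omega
  have hjb : j ≤ b := by
    rw [hjdef]
    split
    · rename_i h
      have hb1 : b ≠ (l : ℕ) + 1 := fun hb => hnab ⟨h, hb⟩
      omega
    · omega
  have hjl : j ≠ (l : ℕ) + 1 := by
    rw [hjdef]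
    split <;> omega
  -- the four rank computations
  have hy0 := key_rank hy j (l : ℕ)
  have hy1 := key_rank hy j ((l : ℕ) + 1)
  have hy2 := key_rank hy j ((l : ℕ) + 2)
  have hx1 := key_rank hx j ((l : ℕ) + 1)
  have hsig := sigma_step l hl j hjl x y heq
  -- submodularity
  have hsetu : {r : Fin n | (l : ℕ) ≤ (r : ℕ)} =
      {r : Fin n | (r : ℕ) = (l : ℕ) ∨ (l : ℕ) + 2 ≤ (r : ℕ)} ∪
        {r : Fin n | (l : ℕ) + 1 ≤ (r : ℕ)} := by
    ext r
    simp only [Set.mem_union, Set.mem_setOf_eq]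
    omega
  have hsup : rSp j y {r : Fin n | (l : ℕ) ≤ (r : ℕ)} =
      rSp j y {r : Fin n | (r : ℕ) = (l : ℕ) ∨ (l : ℕ) + 2 ≤ (r : ℕ)} ⊔
        rSp j y {r : Fin n | (l : ℕ) + 1 ≤ (r : ℕ)} := by
    rw [rSp, rSp, rSp, ← Submodule.span_union, ← Set.image_union, ← hsetu]
  have hinf : rSp j y {r : Fin n | (l : ℕ) + 2 ≤ (r : ℕ)} ≤
      rSp j y {r : Fin n | (r : ℕ) = (l : ℕ) ∨ (l : ℕ) + 2 ≤ (r : ℕ)} ⊓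
        rSp j y {r : Fin n | (l : ℕ) + 1 ≤ (r : ℕ)} := by
    apply le_inf
    · exact Submodule.span_mono (Set.image_mono (fun r hr => Or.inr hr))
    · exact Submodule.span_mono (Set.image_mono (fun r hr => by
        simp only [Set.mem_setOf_eq] at hr ⊢; omega))
  have hdim := Submodule.finrank_sup_add_finrank_inf_eq
    (rSp j y {r : Fin n | (r : ℕ) = (l : ℕ) ∨ (l : ℕ) + 2 ≤ (r : ℕ)})
    (rSp j y {r : Fin n | (l : ℕ) + 1 ≤ (r : ℕ)})
  have hmono := Submodule.finrank_mono hinf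
  -- counting
  have hc1 : {k : Fin n | (l : ℕ) ≤ (k : ℕ) ∧ ((w k : ℕ) < j)}.ncard =
      {k : Fin n | (l : ℕ) + 1 ≤ (k : ℕ) ∧ ((w k : ℕ) < j)}.ncard + 1 := by
    have hins : {k : Fin n | (l : ℕ) ≤ (k : ℕ) ∧ ((w k : ℕ) < j)} =
        insert l {k : Fin n | (l : ℕ) + 1 ≤ (k : ℕ) ∧ ((w k : ℕ) < j)} := by
      ext k
      simp only [Set.mem_insert_iff, Set.mem_setOf_eq]
      constructor
      · rintro ⟨hk1, hk2⟩
        by_cases hkl : k = l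
        · exact Or.inl hkl
        · have : (k : ℕ) ≠ (l : ℕ) := fun h => hkl (Fin.ext h)
          exact Or.inr ⟨by omega, hk2⟩
      · rintro (rfl | ⟨hk1, hk2⟩)
        · exact ⟨le_refl _, hja⟩
        · exact ⟨by omega, hk2⟩
    rw [hins]
    exact Set.ncard_insert_of_notMem (by
      simp only [Set.mem_setOf_eq]
      omega) (Set.toFinite _)
  have hc2 : {k : Fin n | (l : ℕ) + 1 ≤ (k : ℕ) ∧ ((w k : ℕ) < j)} =
      {k : Fin n | (l : ℕ) + 2 ≤ (k : ℕ) ∧ ((w k : ℕ) < j)} := by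
    ext k
    simp only [Set.mem_setOf_eq]
    constructor
    · rintro ⟨hk1, hk2⟩
      have hkl1 : k ≠ l1 := by
        intro h
        subst h
        rw [← hbdef] at hk2
        omega
      have : (k : ℕ) ≠ (l : ℕ) + 1 := fun h => hkl1 (Fin.ext h)
      exact ⟨by omega, hk2⟩
    · rintro ⟨hk1, hk2⟩
      exact ⟨by omega, hk2⟩
  have hcc : {k : Fin n | (l : ℕ) + 1 ≤ (k : ℕ) ∧ ((w k : ℕ) < j)}.ncard =
      {k : Fin n | (l : ℕ) + 2 ≤ (k : ℕ) ∧ ((w k : ℕ) < j)}.ncard := by rw [hc2]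
  rw [hsup] at hy0
  rw [hsig] at hx1
  omega
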